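/- Every G-stable ideal of a group algebra with twisted diagonal action is generated by its invariants: let C be a field with an action of a group G by field automorphisms, Λ an abelian group, and ⟨-,-⟩ : Λ × G → Cˣ a bi-multiplicative pairing. Let G act on the group algebra S = C[Λ] by g • (c · x^λ) = (g • c) ⟨λ, g⟩ · x^λ. Then every G-stable ideal 𝔞 of S satisfies 𝔞 = (𝔞 ∩ S^G) · S. -/

import Mathlib

/-- Every `G`-stable ideal of the group algebra `S = C[Λ]`, with the twisted
diagonal action `g • (c·xᵘ) = (g • c)⟨λ,g⟩·xᵘ`, is generated by its
intersection with the invariant subring `S^G`. -/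
theorem stable_ideal_generated_by_invariants
    (G C Λ : Type*) [Group G] [Field C] [MulSemiringAction G C]
    [AddCommGroup Λ]
    (pairing : Λ → G → Cˣ)
    (hp_add : ∀ l m : Λ, ∀ g : G, pairing (l + m) g = pairing l g * pairing m g)
    (hp_mul : ∀ l : Λ, ∀ g h : G, pairing l (g * h) = pairing l g * pairing l h)
    (act : G → RingAut (AddMonoidAlgebra C Λ))
    (hact : ∀ (g : G) (s : AddMonoidAlgebra C Λ) (l : Λ),
      (act g s).coeff l = g • (s.coeff l) * (pairing l g : C))
    (𝔞 : Ideal (AddMonoidAlgebra C Λ))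
    (hstable : ∀ (g : G), ∀ s ∈ 𝔞, act g s ∈ 𝔞) :
    𝔞 = Ideal.span {s : AddMonoidAlgebra C Λ | s ∈ 𝔞 ∧ ∀ g : G, act g s = s} := by
  classical
  set 𝔟 : Ideal (AddMonoidAlgebra C Λ) :=
    Ideal.span {s : AddMonoidAlgebra C Λ | s ∈ 𝔞 ∧ ∀ g : G, act g s = s} with h𝔟
  -- pairing 0 g = 1
  have hp0 : ∀ g : G, (pairing 0 g : C) = 1 := by
    intro g
    have h := hp_add 0 0 g
    simp only [add_zero] at h
    have h1 : pairing 0 g * pairing 0 g = pairing 0 g * 1 := by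
      rw [mul_one]; exact h.symm
    have h2 := mul_left_cancel h1
    rw [h2]; simp
  -- main induction
  have main : ∀ n : ℕ, ∀ s : AddMonoidAlgebra C Λ, s ∈ 𝔞 → s.coeff.support.card ≤ n → s ∈ 𝔟 := by
    intro n
    induction n with
    | zero =>
      intro s hs hcard
      have : s = 0 := by
        rw [← AddMonoidAlgebra.coeff_eq_zero, ← Finsupp.support_eq_empty]
        exact Finset.card_eq_zero.mp (Nat.le_zero.mp hcard)
      rw [this]; exact zero_mem _
    | succ m ih =>
      intro s hs hcard
      by_cases hs0 : s = 0
      · rw [hs0]; exact zero_mem _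
      · obtain ⟨l₀, hl₀⟩ := Finsupp.support_nonempty_iff.mpr (AddMonoidAlgebra.coeff_eq_zero.not.mpr hs0)
        have hc : s.coeff l₀ ≠ 0 := Finsupp.mem_support_iff.mp hl₀
        set c : C := s.coeff l₀ with hcdef
        set u : AddMonoidAlgebra C Λ := AddMonoidAlgebra.single (-l₀) c⁻¹ * s with hu
        have hua : u ∈ 𝔞 := Ideal.mul_mem_left _ _ hs
        have hucoef : ∀ μ : Λ, u.coeff μ = c⁻¹ * s.coeff (l₀ + μ) := by
          intro μ
          rw [hu, AddMonoidAlgebra.coeff_single_mul_apply, neg_neg]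
        have hu0 : u.coeff 0 = 1 := by
          rw [hucoef, add_zero, ← hcdef, inv_mul_cancel₀ hc]
        -- support of u
        have husupp : u.coeff.support = s.coeff.support.map
            ⟨fun x => -l₀ + x, fun a b h => by simpa using h⟩ := by
          ext μ
          simp only [Finsupp.mem_support_iff, Finset.mem_map, Function.Embedding.coeFn_mk]
          constructor
          · intro h
            refine ⟨l₀ + μ, ?_, by show -l₀ + (l₀ + μ) = μ; abel⟩
            intro h0
            rw [hucoef, h0, mul_zero] at h
            exact h rfl
          · rintro ⟨a, ha, rfl⟩
            rw [hucoef]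
            have : l₀ + (-l₀ + a) = a := by abel
            show c⁻¹ * s.coeff (l₀ + (-l₀ + a)) ≠ 0
            rw [this]
            exact mul_ne_zero (inv_ne_zero hc) ha
        have hucard : u.coeff.support.card = s.coeff.support.card := by
          rw [husupp, Finset.card_map]
        -- s = single l₀ c * u
        have hsu : s = AddMonoidAlgebra.single l₀ c * u := by
          rw [hu, ← mul_assoc, AddMonoidAlgebra.single_mul_single,
            mul_inv_cancel₀ hc, add_neg_cancel]
          rw [← AddMonoidAlgebra.one_def, one_mul]
        -- enough to show u ∈ 𝔟
        suffices hub : u ∈ 𝔟 by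
          rw [hsu]; exact Ideal.mul_mem_left _ _ hub
        by_cases hinv : ∀ g : G, act g u = u
        · exact Ideal.subset_span ⟨hua, hinv⟩
        · push_neg at hinv
          obtain ⟨g₀, hg₀⟩ := hinv
          set t : AddMonoidAlgebra C Λ := act g₀ u - u with ht
          have hta : t ∈ 𝔞 := sub_mem (hstable g₀ u hua) hua
          have htcoef : ∀ μ : Λ, t.coeff μ = g₀ • (u.coeff μ) * (pairing μ g₀ : C) - u.coeff μ := by
            intro μ
            rw [ht, AddMonoidAlgebra.coeff_sub, Finsupp.sub_apply, hact]
          have ht0 : t.coeff 0 = 0 := by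
            rw [htcoef, hu0, hp0, smul_one, mul_one, sub_self]
          have htsupp : t.coeff.support ⊆ u.coeff.support.erase 0 := by
            intro μ hμ
            have hμne : t.coeff μ ≠ 0 := Finsupp.mem_support_iff.mp hμ
            have hμ0 : μ ≠ 0 := by rintro rfl; exact hμne ht0
            refine Finset.mem_erase.mpr ⟨hμ0, Finsupp.mem_support_iff.mpr ?_⟩
            intro h0
            rw [htcoef, h0, smul_zero, zero_mul, sub_zero] at hμne
            exact hμne rfl
          have h0mem : (0 : Λ) ∈ u.coeff.support := Finsupp.mem_support_iff.mpr (by rw [hu0]; exact one_ne_zero)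
          have htcard : t.coeff.support.card ≤ m := by
            calc t.coeff.support.card ≤ (u.coeff.support.erase 0).card := Finset.card_le_card htsupp
              _ = u.coeff.support.card - 1 := Finset.card_erase_of_mem h0mem
              _ ≤ m := by omega
          have htb : t ∈ 𝔟 := ih t hta htcard
          have htne : t ≠ 0 := by
            intro h0
            apply hg₀
            rw [← sub_eq_zero]; exact h0
          obtain ⟨μ₀, hμ₀⟩ := Finsupp.support_nonempty_iff.mpr (AddMonoidAlgebra.coeff_eq_zero.not.mpr htne)
          have ha : t.coeff μ₀ ≠ 0 := Finsupp.mem_support_iff.mp hμ₀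
          set u' : AddMonoidAlgebra C Λ :=
            u - AddMonoidAlgebra.single 0 (u.coeff μ₀ * (t.coeff μ₀)⁻¹) * t with hu'
          have hu'a : u' ∈ 𝔞 := sub_mem hua (Ideal.mul_mem_left _ _ hta)
          have hu'coef : ∀ μ : Λ, u'.coeff μ = u.coeff μ - u.coeff μ₀ * (t.coeff μ₀)⁻¹ * t.coeff μ := by
            intro μ
            rw [hu', AddMonoidAlgebra.coeff_sub, Finsupp.sub_apply, AddMonoidAlgebra.coeff_single_zero_mul]
          have hu'supp : u'.coeff.support ⊆ u.coeff.support.erase μ₀ := by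
            intro μ hμ
            have hμne : u'.coeff μ ≠ 0 := Finsupp.mem_support_iff.mp hμ
            refine Finset.mem_erase.mpr ⟨?_, Finsupp.mem_support_iff.mpr ?_⟩
            · rintro rfl
              rw [hu'coef, mul_assoc, inv_mul_cancel₀ ha, mul_one, sub_self] at hμne
              exact hμne rfl
            · intro h0
              have htμ : t.coeff μ = 0 := by
                by_contra h1
                have : μ ∈ u.coeff.support.erase 0 := htsupp (Finsupp.mem_support_iff.mpr h1)
                exact (Finsupp.mem_support_iff.mp (Finset.mem_of_mem_erase this)) h0
              rw [hu'coef, h0, htμ, mul_zero, sub_zero] at hμne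
              exact hμne rfl
          have hμ₀u : μ₀ ∈ u.coeff.support := Finset.mem_of_mem_erase (htsupp hμ₀)
          have hu'card : u'.coeff.support.card ≤ m := by
            calc u'.coeff.support.card ≤ (u.coeff.support.erase μ₀).card := Finset.card_le_card hu'supp
              _ = u.coeff.support.card - 1 := Finset.card_erase_of_mem hμ₀u
              _ ≤ m := by omega
          have hu'b : u' ∈ 𝔟 := ih u' hu'a hu'card
          have : u = u' + AddMonoidAlgebra.single 0 (u.coeff μ₀ * (t.coeff μ₀)⁻¹) * t := by
            rw [hu']; ring
          rw [this]
          exact add_mem hu'b (Ideal.mul_mem_left _ _ htb)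
  apply le_antisymm
  · intro s hs
    exact main s.coeff.support.card s hs le_rfl
  · rw [h𝔟, Ideal.span_le]
    rintro s ⟨hs, -⟩
    exact hs
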